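/- For all integers m ≥ 1, i with m ≤ i, and k ≥ 0, the identity ∑_{l=m-1}^{i-1} (-1)^{i-1-l} C(i-m, i-1-l) C(l+k, m-1) = C(m+k-1, 2m-1-i) holds, where C(n,j) denotes the binomial coefficient with the convention C(n,j) = 0 for j < 0 or j > n. -/

import Mathlib

/-- Extended binomial coefficient: `C n j = 0` when `j < 0` or `j > n`. -/
noncomputable def extChoose (n j : ℤ) : ℤ :=
  if 0 ≤ j ∧ j ≤ n then (Nat.choose n.toNat j.toNat : ℤ) else 0

lemma extChoose_nat (a : ℕ) (j : ℤ) (h0 : 0 ≤ j) (h1 : j ≤ a) :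
    extChoose a j = (Nat.choose a j.toNat : ℤ) := by
  simp [extChoose, h0, h1]

lemma extChoose_neg (a j : ℤ) (h : j < 0) : extChoose a j = 0 := by
  simp only [extChoose, ite_eq_right_iff]
  intro h'; omega

lemma extChoose_big (a : ℕ) (j : ℤ) (h : (a : ℤ) < j) : extChoose a j = 0 := by
  simp only [extChoose, ite_eq_right_iff]
  intro h'; omega

lemma extPascal (a : ℕ) (j : ℤ) :
    extChoose (a + 1) j - extChoose a j = extChoose a (j - 1) := by
  rcases lt_or_ge j 0 with h | h
  · rw [extChoose_neg _ _ h, extChoose_neg _ _ h, extChoose_neg _ _ (by omega)]; ring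
  rcases eq_or_lt_of_le h with h0 | h0
  · subst h0
    rw [extChoose_neg a (0 - 1 : ℤ) (by norm_num),
      extChoose_nat a 0 le_rfl (by positivity),
      show ((a : ℤ) + 1) = ((a + 1 : ℕ) : ℤ) by push_cast; ring,
      extChoose_nat (a + 1) 0 le_rfl (by positivity)]
    simp
  rcases le_or_gt j a with h1 | h1
  · rw [extChoose_nat a j h h1,
      show ((a : ℤ) + 1) = ((a + 1 : ℕ) : ℤ) by push_cast; ring,
      extChoose_nat (a + 1) j h (by push_cast; omega),
      extChoose_nat a (j - 1) (by omega) (by omega)]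
    have ht : j.toNat = (j - 1).toNat + 1 := by omega
    rw [ht, Nat.choose_succ_succ']
    push_cast; ring
  rcases eq_or_lt_of_le (show (a : ℤ) + 1 ≤ j by omega) with h2 | h2
  · rw [show ((a : ℤ) + 1) = ((a + 1 : ℕ) : ℤ) by push_cast; ring,
      extChoose_nat (a + 1) j (by omega) (by push_cast; omega),
      extChoose_big a j h1,
      show j - 1 = (a : ℤ) by omega,
      extChoose_nat a a (by positivity) le_rfl]
    have : j.toNat = a + 1 := by omega
    simp [this]
  · rw [show ((a : ℤ) + 1) = ((a + 1 : ℕ) : ℤ) by push_cast; ring,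
      extChoose_big (a + 1) j (by push_cast; omega),
      extChoose_big a j h1, extChoose_big a (j - 1) (by omega)]
    ring

lemma keyB (M : ℕ) : ∀ n K : ℕ,
    ∑ t ∈ Finset.range (n + 1),
      (-1 : ℤ) ^ t * (Nat.choose n t : ℤ) * (Nat.choose (M + K + t) M : ℤ)
      = (-1 : ℤ) ^ n * extChoose ((M + K : ℕ) : ℤ) ((M : ℤ) - n) := by
  intro n
  induction n with
  | zero =>
    intro K
    simp only [Nat.cast_zero, sub_zero, pow_zero, one_mul]
    rw [extChoose_nat (M + K) M (by positivity) (by push_cast; omega)]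
    simp
  | succ n ih =>
    intro K
    have hB1 := ih (K + 1)
    have hB0 := ih K
    -- peel off the first term of the sum
    rw [Finset.sum_range_succ']
    have step1 : ∀ s ∈ Finset.range (n + 1),
        (-1 : ℤ) ^ (s + 1) * (Nat.choose (n + 1) (s + 1) : ℤ)
            * (Nat.choose (M + K + (s + 1)) M : ℤ)
        = -((-1 : ℤ) ^ s * (Nat.choose n s : ℤ) * (Nat.choose (M + (K + 1) + s) M : ℤ))
          + -((-1 : ℤ) ^ s * (Nat.choose n (s + 1) : ℤ) * (Nat.choose (M + K + (s + 1)) M : ℤ)) := by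
      intro s _
      rw [Nat.choose_succ_succ n s, show M + K + (s + 1) = M + (K + 1) + s by ring]
      push_cast; ring
    rw [Finset.sum_congr rfl step1, Finset.sum_add_distrib, Finset.sum_neg_distrib,
      Finset.sum_neg_distrib, hB1]
    have haux0 : ∑ t ∈ Finset.range (n + 1),
        (-1 : ℤ) ^ t * (Nat.choose n t : ℤ) * (Nat.choose (M + K + t) M : ℤ)
        = (∑ s ∈ Finset.range n,
            (-1 : ℤ) ^ (s + 1) * (Nat.choose n (s + 1) : ℤ) * (Nat.choose (M + K + (s + 1)) M : ℤ))
          + (Nat.choose (M + K) M : ℤ) := by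
      rw [Finset.sum_range_succ'
        (fun t => (-1 : ℤ) ^ t * (Nat.choose n t : ℤ) * (Nat.choose (M + K + t) M : ℤ)) n]
      simp
    have aux : ∑ s ∈ Finset.range (n + 1),
        (-1 : ℤ) ^ s * (Nat.choose n (s + 1) : ℤ) * (Nat.choose (M + K + (s + 1)) M : ℤ)
        = (Nat.choose (M + K) M : ℤ)
          - (-1 : ℤ) ^ n * extChoose ((M + K : ℕ) : ℤ) ((M : ℤ) - n) := by
      rw [Finset.sum_range_succ]
      simp only [Nat.choose_succ_self, Nat.cast_zero, mul_zero, zero_mul, add_zero]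
      have hneg : ∑ s ∈ Finset.range n,
          (-1 : ℤ) ^ s * (Nat.choose n (s + 1) : ℤ) * (Nat.choose (M + K + (s + 1)) M : ℤ)
          = -∑ s ∈ Finset.range n,
              (-1 : ℤ) ^ (s + 1) * (Nat.choose n (s + 1) : ℤ)
                * (Nat.choose (M + K + (s + 1)) M : ℤ) := by
        rw [← Finset.sum_neg_distrib]
        apply Finset.sum_congr rfl
        intro s _; ring
      rw [hneg]
      linarith [hB0, haux0]
    rw [aux]
    have hMK : extChoose ((M + K : ℕ) : ℤ) ((M : ℤ) - (n + 1 : ℕ))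
        = extChoose ((M + K + 1 : ℕ) : ℤ) ((M : ℤ) - n)
          - extChoose ((M + K : ℕ) : ℤ) ((M : ℤ) - n) := by
      have := extPascal (M + K) ((M : ℤ) - n)
      rw [show (M : ℤ) - n - 1 = (M : ℤ) - (n + 1 : ℕ) by push_cast; ring] at this
      rw [← this]
      push_cast; ring_nf
    rw [hMK, show ((M + K + 1 : ℕ) : ℤ) = ((M + (K + 1) : ℕ) : ℤ) by push_cast; ring]
    push_cast [Nat.choose_zero_right]
    ring

theorem stmt0 (m i k : ℤ) (hm : 1 ≤ m) (hi : m ≤ i) (hk : 0 ≤ k) :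
    ∑ l ∈ Finset.Icc (m - 1) (i - 1),
      (-1 : ℤ) ^ (i - 1 - l).toNat * extChoose (i - m) (i - 1 - l) * extChoose (l + k) (m - 1)
      = extChoose (m + k - 1) (2 * m - 1 - i) := by
  set M := (m - 1).toNat with hM
  set K := k.toNat with hK
  set n := (i - m).toNat with hn
  have hMc : (M : ℤ) = m - 1 := by omega
  have hKc : (K : ℤ) = k := by omega
  have hnc : (n : ℤ) = i - m := by omega
  have hmap : Finset.Icc (m - 1) (i - 1)
      = Finset.map ⟨fun t : ℕ => m - 1 + t, show Function.Injective (fun t : ℕ => m - 1 + (t : ℤ)) from fun a b h => by simpa using h⟩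
          (Finset.range (n + 1)) := by
    ext x
    simp only [Finset.mem_Icc, Finset.mem_map, Finset.mem_range, Function.Embedding.coeFn_mk]
    constructor
    · rintro ⟨h1, h2⟩
      exact ⟨(x - (m - 1)).toNat, by omega, by omega⟩
    · rintro ⟨t, ht, rfl⟩
      omega
  rw [hmap, Finset.sum_map]
  simp only [Function.Embedding.coeFn_mk]
  have hterm : ∀ t ∈ Finset.range (n + 1),
      (-1 : ℤ) ^ (i - 1 - (m - 1 + t)).toNat * extChoose (i - m) (i - 1 - (m - 1 + t))
        * extChoose (m - 1 + t + k) (m - 1)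
      = (-1 : ℤ) ^ n
        * ((-1 : ℤ) ^ t * (Nat.choose n t : ℤ) * (Nat.choose (M + K + t) M : ℤ)) := by
    intro t ht
    simp only [Finset.mem_range] at ht
    have htn : t ≤ n := by omega
    have e1 : (i - 1 - (m - 1 + t)).toNat = n - t := by omega
    have e2 : extChoose (i - m) (i - 1 - (m - 1 + t)) = (Nat.choose n (n - t) : ℤ) := by
      rw [show i - m = ((n : ℕ) : ℤ) by omega]
      rw [extChoose_nat n (i - 1 - (m - 1 + t)) (by omega) (by omega), e1]
    have e3 : extChoose (m - 1 + t + k) (m - 1) = (Nat.choose (M + K + t) M : ℤ) := by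
      rw [show m - 1 + t + k = ((M + K + t : ℕ) : ℤ) by push_cast; omega]
      rw [extChoose_nat (M + K + t) (m - 1) (by omega) (by push_cast; omega),
        show (m - 1).toNat = M from rfl]
    rw [e1, e2, e3, Nat.choose_symm htn]
    have epow : (-1 : ℤ) ^ (n - t) = (-1 : ℤ) ^ n * (-1 : ℤ) ^ t := by
      have : (-1 : ℤ) ^ (n - t) * (-1 : ℤ) ^ t = (-1 : ℤ) ^ n := by
        rw [← pow_add, Nat.sub_add_cancel htn]
      have h2 : ((-1 : ℤ) ^ t) * ((-1 : ℤ) ^ t) = 1 := by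
        rw [← pow_add]; exact Even.neg_one_pow ⟨t, rfl⟩
      calc (-1 : ℤ) ^ (n - t) = (-1 : ℤ) ^ (n - t) * ((-1 : ℤ) ^ t * (-1 : ℤ) ^ t) := by
            rw [h2, mul_one]
        _ = ((-1 : ℤ) ^ (n - t) * (-1 : ℤ) ^ t) * (-1 : ℤ) ^ t := by ring
        _ = (-1 : ℤ) ^ n * (-1 : ℤ) ^ t := by rw [this]
    rw [epow]
    ring
  rw [Finset.sum_congr rfl hterm, ← Finset.mul_sum, keyB M n K]
  have hre : extChoose ((M + K : ℕ) : ℤ) ((M : ℤ) - n) = extChoose (m + k - 1) (2 * m - 1 - i) := by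
    congr 1 <;> push_cast <;> omega
  rw [hre, ← mul_assoc, ← pow_add, Even.neg_one_pow ⟨n, rfl⟩, one_mul]
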